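/- Let x : ℤ → ℝ satisfy x(i) > 0 and x(i−1)·x(i+1) = x(i)² + 1 for all i ∈ ℤ. Then for every i ∈ ℕ the quantity (x(j+i) + x(j−i))/x(j) is independent of j ∈ ℤ: for all j, k ∈ ℤ one has (x(j+i) + x(j−i)) · x(k) = (x(k+i) + x(k−i)) · x(j). (Well-definedness of the elements t_i with x_j · t_i = x_{j+i} + x_{j−i} for the rank-2 cluster algebra with b = c = 2.) -/

import Mathlib

/-- For a positive solution of the rank-2 `(2,2)` cluster recurrence, the
quantity `(x (j+i) + x (j-i)) / x j` is independent of `j`; i.e. the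
elements `t i` with `x j * t i = x (j+i) + x (j-i)` are well defined. -/
theorem rank2_22_t_well_defined (x : ℤ → ℝ)
    (hpos : ∀ i : ℤ, 0 < x i)
    (hrec : ∀ i : ℤ, x (i - 1) * x (i + 1) = x i ^ 2 + 1) :
    ∀ (i : ℕ) (j k : ℤ),
      (x (j + (i : ℤ)) + x (j - (i : ℤ))) * x k =
        (x (k + (i : ℤ)) + x (k - (i : ℤ))) * x j := by
  have hne : ∀ i : ℤ, x i ≠ 0 := fun i => (hpos i).ne'
  -- one-step invariance of (x(j+1)+x(j-1))/x(j)
  have hstep : ∀ j : ℤ, (x (j+1) + x (j-1)) * x (j+1) = (x (j+2) + x j) * x j := by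
    intro j
    have h1 := hrec j
    have h2 := hrec (j+1)
    have e1 : j + 1 - 1 = j := by ring
    have e2 : j + 1 + 1 = j + 2 := by ring
    rw [e1, e2] at h2
    nlinarith [h1, h2]
  -- the quantity is constant
  have key : ∀ j : ℤ, (x (j+1) + x (j-1)) * x 0 = (x 1 + x (-1)) * x j := by
    intro j
    induction j using Int.induction_on with
    | zero => norm_num
    | succ n ih =>
      have hs := hstep (n : ℤ)
      have e1 : (n : ℤ) + 1 + 1 = (n : ℤ) + 2 := by ring
      have e2 : (n : ℤ) + 1 - 1 = (n : ℤ) := by ring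
      rw [e1, e2]
      apply mul_right_cancel₀ (hne n)
      linear_combination x ((n:ℤ)+1) * ih - x 0 * hs
    | pred n ih =>
      have hs := hstep (-(n : ℤ) - 1)
      have e1 : -(n : ℤ) - 1 + 1 = -(n : ℤ) := by ring
      have e2 : -(n : ℤ) - 1 + 2 = -(n : ℤ) + 1 := by ring
      have e6 : -(n : ℤ) - 1 - 1 = -(n : ℤ) - 2 := by ring
      rw [e1, e2, e6] at hs
      show (x (-(n:ℤ) - 1 + 1) + x (-(n:ℤ) - 1 - 1)) * x 0 = (x 1 + x (-1)) * x (-(n:ℤ) - 1)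
      rw [e1, e6]
      apply mul_right_cancel₀ (hne (-(n:ℤ)))
      linear_combination x 0 * hs + x (-(n:ℤ)-1) * ih
  set c : ℝ := (x 1 + x (-1)) / x 0 with hc
  have hlin : ∀ j : ℤ, x (j+1) + x (j-1) = c * x j := by
    intro j
    have h := key j
    rw [hc, div_mul_eq_mul_div, eq_div_iff (hne 0)]
    exact h
  -- two-step induction: for each i there is a constant r with x(j+i)+x(j-i) = r * x j
  have main : ∀ i : ℕ, (∃ r : ℝ, ∀ j : ℤ, x (j + (i:ℤ)) + x (j - (i:ℤ)) = r * x j) ∧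
      (∃ r : ℝ, ∀ j : ℤ, x (j + ((i:ℤ)+1)) + x (j - ((i:ℤ)+1)) = r * x j) := by
    intro i
    induction i with
    | zero =>
      constructor
      · exact ⟨2, fun j => by norm_num; ring⟩
      · refine ⟨c, fun j => ?_⟩
        have := hlin j
        norm_num
        linarith [this]
    | succ n ih =>
      obtain ⟨⟨r, hr⟩, ⟨s, hs⟩⟩ := ih
      refine ⟨⟨s, fun j => by
        have := hs j
        push_cast
        push_cast at this
        convert this using 3 <;> ring⟩, ⟨c * s - r, fun j => ?_⟩⟩
      have h1 := hlin (j + (n:ℤ) + 1)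
      have h2 := hlin (j - (n:ℤ) - 1)
      have e1 : j + (n:ℤ) + 1 + 1 = j + ((n:ℤ) + 2) := by ring
      have e2 : j + (n:ℤ) + 1 - 1 = j + (n:ℤ) := by ring
      have e3 : j - (n:ℤ) - 1 + 1 = j - (n:ℤ) := by ring
      have e4 : j - (n:ℤ) - 1 - 1 = j - ((n:ℤ) + 2) := by ring
      rw [e1, e2] at h1
      rw [e3, e4] at h2
      have hrj := hr j
      have hsj := hs j
      have e5 : j + ((n:ℤ) + 1) = j + (n:ℤ) + 1 := by ring
      have e6 : j - ((n:ℤ) + 1) = j - (n:ℤ) - 1 := by ring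
      rw [e5, e6] at hsj
      push_cast
      have goal : x (j + ((n:ℤ) + 2)) + x (j - ((n:ℤ) + 2)) = (c * s - r) * x j := by
        linear_combination h1 + h2 + c * hsj - hrj
      convert goal using 3 <;> ring
  intro i j k
  obtain ⟨⟨r, hr⟩, _⟩ := main i
  rw [hr j, hr k]
  ring
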